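/- arXiv:2003.05333 — 2 statements merged into one kernel-verified Lean document; each statement's English description precedes it below -/
import Mathlib

section
/- Let B be an atomic Boolean algebra, V a set, and f : B → Set V a Boolean algebra homomorphism (into the powerset Boolean algebra of V) such that (i) the union of f(a) over all atoms a of B equals V, and (ii) f preserves all existing suprema, i.e. whenever s is the least upper bound in B of a subset X of B, f(s) equals the union of f(x) for x in X. Then the map g from the powerset of the set of atoms of B to Set V defined by g(S) = ⋃_{a ∈ S} f(a) is a Boolean algebra homomorphism, and g({a : a is an atom of B with a ≤ b}) = f(b) for every b in B. (This is the key step showing that a complete representation of an atomic algebra B induces a representation of its completion Cm At B.) -/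
lemma isLUB_atoms_le' {B : Type*} [BooleanAlgebra B] [IsAtomic B] (b : B) :
    IsLUB {x : B | IsAtom x ∧ x ≤ b} b := by
  constructor
  · rintro x ⟨_, hx⟩; exact hx
  · intro u hu
    by_contra h
    have hne : b \ u ≠ ⊥ := fun h0 => h (sdiff_eq_bot_iff.mp h0)
    rcases (IsAtomic.eq_bot_or_exists_atom_le (b \ u)).resolve_left hne with ⟨a, ha, hle⟩
    have h1 : a ≤ b := hle.trans sdiff_le
    have h2 : a ≤ uᶜ := hle.trans (sdiff_eq (x := b) (y := u) ▸ inf_le_right)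
    have h3 : a ≤ u := hu ⟨ha, h1⟩
    have : a ≤ ⊥ := by
      calc a ≤ u ⊓ uᶜ := le_inf h3 h2
      _ = ⊥ := inf_compl_eq_bot
    exact ha.1 (le_bot_iff.mp this)

/-- A complete representation of an atomic Boolean algebra `B` (a Boolean
homomorphism `f : B → Set V` whose images of atoms cover `V` and which
preserves all existing suprema) induces a representation
`g : Set (atoms of B) → Set V` of its completion `Cm At B`, given by
`g S = ⋃ a ∈ S, f a`, with `g` extending `f` via `b ↦ {atoms below b}`. -/
theorem complete_representation_induces_representation_of_completion
    {B : Type*} [BooleanAlgebra B] [IsAtomic B] {V : Type*}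
    (f : B → Set V)
    (hbot : f ⊥ = ∅)
    (htop : f ⊤ = Set.univ)
    (hsup : ∀ a b : B, f (a ⊔ b) = f a ∪ f b)
    (hinf : ∀ a b : B, f (a ⊓ b) = f a ∩ f b)
    (hcompl : ∀ a : B, f aᶜ = (f a)ᶜ)
    (hcover : (⋃ a : {a : B // IsAtom a}, f a.val) = Set.univ)
    (hcomplete : ∀ (X : Set B) (s : B), IsLUB X s → f s = ⋃ x ∈ X, f x) :
    let g : Set {a : B // IsAtom a} → Set V := fun S => ⋃ a ∈ S, f a.val
    g ∅ = ∅ ∧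
    g Set.univ = Set.univ ∧
    (∀ S T : Set {a : B // IsAtom a}, g (S ∪ T) = g S ∪ g T) ∧
    (∀ S T : Set {a : B // IsAtom a}, g (S ∩ T) = g S ∩ g T) ∧
    (∀ S : Set {a : B // IsAtom a}, g Sᶜ = (g S)ᶜ) ∧
    (∀ b : B, g {a | a.val ≤ b} = f b) := by
  intro g
  -- images of distinct atoms are disjoint
  have hdisj : ∀ a b : {a : B // IsAtom a}, a ≠ b → f a.val ∩ f b.val = ∅ := by
    intro a b hab
    rw [← hinf]
    have : a.val ⊓ b.val = ⊥ := by
      by_contra h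
      have h1 : a.val ≤ b.val := by
        rcases a.2.le_iff.mp (inf_le_left (a := a.val) (b := b.val)) with h' | h'
        · exact absurd h' h
        · exact h' ▸ inf_le_right
      rcases b.2.le_iff.mp h1 with h' | h'
      · exact a.2.1 h'
      · exact hab (Subtype.ext h')
    rw [this, hbot]
  have hbot' : g ∅ = ∅ := by simp [g]
  have huniv : g Set.univ = Set.univ := by
    simpa [g, Set.iUnion_subtype] using hcover
  have hun : ∀ S T : Set {a : B // IsAtom a}, g (S ∪ T) = g S ∪ g T := by
    intro S T; simp [g, Set.biUnion_union]
  have hin : ∀ S T : Set {a : B // IsAtom a}, g (S ∩ T) = g S ∩ g T := by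
    intro S T
    apply Set.Subset.antisymm
    · exact Set.subset_inter (Set.biUnion_mono Set.inter_subset_left fun _ _ => le_rfl)
        (Set.biUnion_mono Set.inter_subset_right fun _ _ => le_rfl)
    · rintro x ⟨hxS, hxT⟩
      rcases Set.mem_iUnion₂.mp hxS with ⟨a, haS, hxa⟩
      rcases Set.mem_iUnion₂.mp hxT with ⟨b, hbT, hxb⟩
      have hab : a = b := by
        by_contra h
        have := hdisj a b h
        exact absurd (Set.mem_inter hxa hxb) (by rw [this]; exact Set.notMem_empty x)
      exact Set.mem_iUnion₂.mpr ⟨a, ⟨haS, hab ▸ hbT⟩, hxa⟩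
  have hcmpl : ∀ S : Set {a : B // IsAtom a}, g Sᶜ = (g S)ᶜ := by
    intro S
    have h1 : g Sᶜ ∪ g S = Set.univ := by rw [← hun]; simp [huniv]
    have h2 : g Sᶜ ∩ g S = ∅ := by rw [← hin]; simp [hbot']
    apply Set.Subset.antisymm
    · intro x hx hx'
      exact absurd (Set.mem_inter hx hx') (by rw [h2]; exact Set.notMem_empty x)
    · intro x hx
      rcases (h1 ▸ Set.mem_univ x : x ∈ g Sᶜ ∪ g S) with h | h
      · exact h
      · exact absurd h hx
  refine ⟨hbot', huniv, hun, hin, hcmpl, ?_⟩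
  intro b
  rw [hcomplete {x : B | IsAtom x ∧ x ≤ b} b (isLUB_atoms_le' b)]
  apply Set.Subset.antisymm
  · intro x hx
    rcases Set.mem_iUnion₂.mp hx with ⟨a, ha, hxa⟩
    exact Set.mem_iUnion₂.mpr ⟨a.val, ⟨a.2, ha⟩, hxa⟩
  · intro x hx
    rcases Set.mem_iUnion₂.mp hx with ⟨c, ⟨hc, hcb⟩, hxc⟩
    exact Set.mem_iUnion₂.mpr ⟨⟨c, hc⟩, hcb, hxc⟩
end

section
/- Let A and B be types, U a nonempty set, f₀ : A ⊕ B → U, W the weak space determined by f₀, and c_i the cylindrifications as above. Let N = {X ⊆ W : c_{inr b} X = X for every b in B}. Then N contains ∅ and W, is closed under arbitrary unions, arbitrary intersections, and complementation within W, and the atoms of N (the minimal nonempty members of N under inclusion) are exactly the sets S_f = {g ∈ W : g(inl a) = f(inl a) for all a in A}, for f ∈ W; moreover N is atomic: every nonempty member of N includes some S_f. (In the paper's notation: the neat reduct Nr_α of the powerset algebra of a weak space of dimension α + ω is an atomic Boolean algebra whose atoms are the sets of sequences with a prescribed restriction to the first α coordinates.) -/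
/-- The weak space with base `U` determined by `f₀ : A ⊕ B → U`: all functions
differing from `f₀` in only finitely many coordinates. -/
def weakSpace {A B U : Type*} (f₀ : A ⊕ B → U) : Set (A ⊕ B → U) :=
  {f | {i | f i ≠ f₀ i}.Finite}

/-- Cylindrification in direction `i` inside the weak space determined by `f₀`:
members of the weak space agreeing with some member of `X` off `i`. -/
def cyl {A B U : Type*} (f₀ : A ⊕ B → U) (i : A ⊕ B) (X : Set (A ⊕ B → U)) :
    Set (A ⊕ B → U) :=
  {f | f ∈ weakSpace f₀ ∧ ∃ g ∈ X, ∀ j : A ⊕ B, j ≠ i → f j = g j}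

lemma key_aux {A B U : Type*} (f₀ : A ⊕ B → U) (X : Set (A ⊕ B → U))
    (hXW : X ⊆ weakSpace f₀)
    (hX : ∀ b : B, cyl f₀ (Sum.inr b) X = X) :
    ∀ (s : Finset (A ⊕ B)) (g h : A ⊕ B → U), g ∈ X → h ∈ weakSpace f₀ →
      (∀ a : A, h (Sum.inl a) = g (Sum.inl a)) →
      {i | h i ≠ g i} ⊆ ↑s → h ∈ X := by
  classical
  intro s
  induction s using Finset.induction_on with
  | empty =>
    intro g h hg _ _ hsub
    have : h = g := funext fun i => by
      by_contra hne; simpa using hsub hne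
    rwa [this]
  | @insert i s hi ih =>
    intro g h hg hhW hA hsub
    cases i with
    | inl a =>
      refine ih g h hg hhW hA fun j hj => ?_
      have := hsub hj
      simp only [Finset.coe_insert, Set.mem_insert_iff, Finset.mem_coe] at this
      rcases this with h1 | h1
      · exact absurd (h1 ▸ hA a) hj
      · exact h1
    | inr b =>
      set h' : A ⊕ B → U := fun j => if j = Sum.inr b then g j else h j with hh'
      have hh'W : h' ∈ weakSpace f₀ := by
        have : {j | h' j ≠ f₀ j} ⊆ {j | h j ≠ f₀ j} ∪ {j | g j ≠ f₀ j} := by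
          intro j hj
          by_cases hjb : j = Sum.inr b
          · right; simpa [hh', hjb] using hj
          · left; simpa [hh', hjb] using hj
        exact Set.Finite.subset ((hhW.union (hXW hg))) this
      have hA' : ∀ a : A, h' (Sum.inl a) = g (Sum.inl a) := by
        intro a; simp [hh', hA a]
      have hsub' : {j | h' j ≠ g j} ⊆ ↑s := by
        intro j hj
        have hjb : j ≠ Sum.inr b := by
          intro e; apply hj; simp [hh', e]
        have : h j ≠ g j := by simpa [hh', hjb] using hj
        have := hsub this
        simp only [Finset.coe_insert, Set.mem_insert_iff, Finset.mem_coe] at this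
        tauto
      have hh'X : h' ∈ X := ih g h' hg hh'W hA' hsub'
      rw [← hX b]
      exact ⟨hhW, h', hh'X, fun j hj => by simp [hh', hj]⟩

lemma key {A B U : Type*} (f₀ : A ⊕ B → U) (X : Set (A ⊕ B → U))
    (hXW : X ⊆ weakSpace f₀)
    (hX : ∀ b : B, cyl f₀ (Sum.inr b) X = X)
    {g h : A ⊕ B → U} (hg : g ∈ X) (hhW : h ∈ weakSpace f₀)
    (hA : ∀ a : A, h (Sum.inl a) = g (Sum.inl a)) : h ∈ X := by
  have hfin : {i | h i ≠ g i}.Finite := by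
    refine Set.Finite.subset (hhW.union (hXW hg)) fun i hi => ?_
    by_contra hcon
    simp only [Set.mem_union, Set.mem_setOf_eq, not_or, not_not] at hcon
    exact hi (hcon.1.trans hcon.2.symm)
  exact key_aux f₀ X hXW hX hfin.toFinset g h hg hhW hA (by simp)

/-- The neat reduct `N` (over the `A`-coordinates) of the powerset algebra of a
weak space contains `∅` and `W`, is closed under arbitrary unions, nonempty
arbitrary intersections and complementation within `W`; its atoms are exactly
the sets `S f` of members of `W` with prescribed restriction to the
`A`-coordinates, and `N` is atomic. -/
theorem neat_reduct_of_weak_space_atomic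
    {A B U : Type*} [Nonempty U] (f₀ : A ⊕ B → U) :
    let W : Set (A ⊕ B → U) := weakSpace f₀
    let N : Set (Set (A ⊕ B → U)) :=
      {X | X ⊆ W ∧ ∀ b : B, cyl f₀ (Sum.inr b) X = X}
    let S : (A ⊕ B → U) → Set (A ⊕ B → U) :=
      fun f => {g | g ∈ W ∧ ∀ a : A, g (Sum.inl a) = f (Sum.inl a)}
    (∅ ∈ N) ∧
    (W ∈ N) ∧
    (∀ 𝒮 : Set (Set (A ⊕ B → U)), 𝒮 ⊆ N → ⋃₀ 𝒮 ∈ N) ∧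
    (∀ 𝒮 : Set (Set (A ⊕ B → U)), 𝒮 ⊆ N → 𝒮.Nonempty → ⋂₀ 𝒮 ∈ N) ∧
    (∀ X ∈ N, W \ X ∈ N) ∧
    (∀ X ∈ N,
      (X.Nonempty ∧ ∀ Y ∈ N, Y ⊆ X → Y.Nonempty → Y = X) ↔ ∃ f ∈ W, X = S f) ∧
    (∀ X ∈ N, X.Nonempty → ∃ f ∈ W, S f ⊆ X) := by
  intro W N S
  -- basic: X ⊆ cyl when X ⊆ W
  have hsup : ∀ (i : A ⊕ B) (X : Set (A ⊕ B → U)), X ⊆ W → X ⊆ cyl f₀ i X :=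
    fun i X hXW f hf => ⟨hXW hf, f, hf, fun _ _ => rfl⟩
  -- S f ∈ N for any f
  have hSN : ∀ f : A ⊕ B → U, S f ∈ N := by
    intro f
    refine ⟨fun g hg => hg.1, fun b => ?_⟩
    apply Set.Subset.antisymm
    · rintro h ⟨hhW, g, ⟨hgW, hgA⟩, hag⟩
      exact ⟨hhW, fun a => (hag (Sum.inl a) (by simp)).trans (hgA a)⟩
    · exact hsup _ _ fun g hg => hg.1
  -- key consequence : S g ⊆ X for g ∈ X ∈ N
  have hSsub : ∀ X ∈ N, ∀ g ∈ X, S g ⊆ X := by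
    rintro X ⟨hXW, hX⟩ g hg h ⟨hhW, hhA⟩
    exact key f₀ X hXW hX hg hhW hhA
  have hSmem : ∀ f ∈ W, f ∈ S f := fun f hf => ⟨hf, fun _ => rfl⟩
  have hSeq : ∀ f g : A ⊕ B → U, (∀ a, g (Sum.inl a) = f (Sum.inl a)) → S g = S f := by
    intro f g hgf
    ext h
    exact ⟨fun ⟨h1, h2⟩ => ⟨h1, fun a => (h2 a).trans (hgf a)⟩,
      fun ⟨h1, h2⟩ => ⟨h1, fun a => (h2 a).trans (hgf a).symm⟩⟩
  refine ⟨⟨Set.empty_subset _, fun b => ?_⟩, ⟨le_refl _, fun b => ?_⟩, ?_, ?_, ?_, ?_, ?_⟩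
  · apply Set.Subset.antisymm
    · rintro f ⟨_, g, hg, _⟩; exact absurd hg (Set.notMem_empty g)
    · exact Set.empty_subset _
  · exact Set.Subset.antisymm (fun f hf => hf.1) (hsup _ _ le_rfl)
  · -- unions
    intro 𝒮 h𝒮
    have hsubW : ⋃₀ 𝒮 ⊆ W := fun f ⟨X, hX, hfX⟩ => (h𝒮 hX).1 hfX
    refine ⟨hsubW, fun b => Set.Subset.antisymm ?_ (hsup _ _ hsubW)⟩
    rintro f ⟨hfW, g, ⟨X, hX, hgX⟩, hag⟩
    refine ⟨X, hX, ?_⟩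
    rw [← (h𝒮 hX).2 b]
    exact ⟨hfW, g, hgX, hag⟩
  · -- intersections
    rintro 𝒮 h𝒮 ⟨X₀, hX₀⟩
    have hsubW : ⋂₀ 𝒮 ⊆ W := fun f hf => (h𝒮 hX₀).1 (hf X₀ hX₀)
    refine ⟨hsubW, fun b => Set.Subset.antisymm ?_ (hsup _ _ hsubW)⟩
    rintro f ⟨hfW, g, hg, hag⟩ X hX
    rw [← (h𝒮 hX).2 b]
    exact ⟨hfW, g, hg X hX, hag⟩
  · -- complement
    rintro X ⟨hXW, hX⟩
    refine ⟨Set.diff_subset, fun b => Set.Subset.antisymm ?_ (hsup _ _ Set.diff_subset)⟩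
    rintro f ⟨hfW, g, ⟨hgW, hgX⟩, hag⟩
    refine ⟨hfW, fun hfX => hgX ?_⟩
    rw [← hX b]
    exact ⟨hgW, f, hfX, fun j hj => (hag j hj).symm⟩
  · -- atoms
    intro X hXN
    constructor
    · rintro ⟨⟨g, hg⟩, hmin⟩
      refine ⟨g, hXN.1 hg, ?_⟩
      exact (hmin (S g) (hSN g) (hSsub X hXN g hg) ⟨g, hSmem g (hXN.1 hg)⟩).symm
    · rintro ⟨f, hfW, rfl⟩
      refine ⟨⟨f, hSmem f hfW⟩, ?_⟩
      rintro Y hYN hYS ⟨g, hg⟩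
      have hgSf := hYS hg
      have : S f = S g := (hSeq f g hgSf.2).symm
      exact Set.Subset.antisymm hYS (this ▸ hSsub Y hYN g hg)
  · -- atomicity
    rintro X hXN ⟨g, hg⟩
    exact ⟨g, hXN.1 hg, hSsub X hXN g hg⟩
end
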